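/- arXiv:1905.08168 — 2 statements merged into one kernel-verified Lean document; each statement's English description precedes it below -/
import Mathlib

section
/- Let u : [0,1] × [0,1] → ℝ be continuously differentiable with u_t + u·u_x = 0 on [0,1] × [0,1] and u(0,x) = φ(x). Then for all (t,x) ∈ [0,1] × [0,1], ∫₀ˣ u(t,z) dz − ∫₀ˣ φ(z) dz + (1/2)∫₀ᵗ (u(τ,x))² dτ equals a function of t only, namely (1/2)∫₀ᵗ (u(τ,0))² dτ. -/
open Set intervalIntegral MeasureTheory

theorem burgers_implies_integral_identity
    (u ut ux : ℝ → ℝ → ℝ) (φ : ℝ → ℝ)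
    (hu : ContinuousOn (fun p : ℝ × ℝ => u p.1 p.2) (Icc 0 1 ×ˢ Icc 0 1))
    (hut : ContinuousOn (fun p : ℝ × ℝ => ut p.1 p.2) (Icc 0 1 ×ˢ Icc 0 1))
    (hux : ContinuousOn (fun p : ℝ × ℝ => ux p.1 p.2) (Icc 0 1 ×ˢ Icc 0 1))
    (hdert : ∀ t ∈ Icc (0:ℝ) 1, ∀ x ∈ Icc (0:ℝ) 1,
      HasDerivWithinAt (fun s => u s x) (ut t x) (Icc 0 1) t)
    (hderx : ∀ t ∈ Icc (0:ℝ) 1, ∀ x ∈ Icc (0:ℝ) 1,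
      HasDerivWithinAt (fun y => u t y) (ux t x) (Icc 0 1) x)
    (hpde : ∀ t ∈ Icc (0:ℝ) 1, ∀ x ∈ Icc (0:ℝ) 1, ut t x + u t x * ux t x = 0)
    (hinit : ∀ x ∈ Icc (0:ℝ) 1, u 0 x = φ x) :
    ∀ t ∈ Icc (0:ℝ) 1, ∀ x ∈ Icc (0:ℝ) 1,
      (∫ z in (0:ℝ)..x, u t z) - (∫ z in (0:ℝ)..x, φ z)
        + (1/2) * ∫ τ in (0:ℝ)..t, (u τ x)^2
      = (1/2) * ∫ τ in (0:ℝ)..t, (u τ 0)^2 := by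
  intro t ht x hx
  obtain ⟨ht0, ht1⟩ := ht
  obtain ⟨hx0, hx1⟩ := hx
  have h01 : (0:ℝ) ∈ Icc (0:ℝ) 1 := ⟨le_refl 0, zero_le_one⟩
  have ht' : t ∈ Icc (0:ℝ) 1 := ⟨ht0, ht1⟩
  have hx' : x ∈ Icc (0:ℝ) 1 := ⟨hx0, hx1⟩
  have hIcct : Icc (0:ℝ) t ⊆ Icc 0 1 := Icc_subset_Icc le_rfl ht1
  have hIccx : Icc (0:ℝ) x ⊆ Icc 0 1 := Icc_subset_Icc le_rfl hx1
  have huIt : uIcc (0:ℝ) t = Icc 0 t := uIcc_of_le ht0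
  have huIx : uIcc (0:ℝ) x = Icc 0 x := uIcc_of_le hx0
  -- slice continuity
  have cont_u_t : ∀ s ∈ Icc (0:ℝ) 1, ContinuousOn (fun z => u s z) (Icc 0 1) := by
    intro s hs
    exact hu.comp (continuous_const.prodMk continuous_id).continuousOn fun z hz => ⟨hs, hz⟩
  have cont_u_x : ∀ z ∈ Icc (0:ℝ) 1, ContinuousOn (fun s => u s z) (Icc 0 1) := by
    intro z hz
    exact hu.comp (continuous_id.prodMk continuous_const).continuousOn fun s hs => ⟨hs, hz⟩
  have cont_ut_t : ∀ s ∈ Icc (0:ℝ) 1, ContinuousOn (fun z => ut s z) (Icc 0 1) := by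
    intro s hs
    exact hut.comp (continuous_const.prodMk continuous_id).continuousOn fun z hz => ⟨hs, hz⟩
  have cont_ux_t : ∀ s ∈ Icc (0:ℝ) 1, ContinuousOn (fun z => ux s z) (Icc 0 1) := by
    intro s hs
    exact hux.comp (continuous_const.prodMk continuous_id).continuousOn fun z hz => ⟨hs, hz⟩
  have cont_ut_x : ∀ z ∈ Icc (0:ℝ) 1, ContinuousOn (fun s => ut s z) (Icc 0 1) := by
    intro z hz
    exact hut.comp (continuous_id.prodMk continuous_const).continuousOn fun s hs => ⟨hs, hz⟩
  -- Step A: FTC in time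
  have stepA : ∀ z ∈ Icc (0:ℝ) 1, (∫ τ in (0:ℝ)..t, ut τ z) = u t z - u 0 z := by
    intro z hz
    apply integral_eq_sub_of_hasDeriv_right_of_le ht0
      ((cont_u_x z hz).mono hIcct)
    · intro τ hτ
      exact (hdert τ (hIcct (Ioo_subset_Icc_self hτ)) z hz).mono_of_mem_nhdsWithin
        (nhdsWithin_le_nhds (Icc_mem_nhds hτ.1 (lt_of_lt_of_le hτ.2 ht1)))
    · apply ContinuousOn.intervalIntegrable
      rw [huIt]; exact (cont_ut_x z hz).mono hIcct
  -- Step B: FTC in space for u*ux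
  have stepB : ∀ τ ∈ Icc (0:ℝ) 1,
      (∫ z in (0:ℝ)..x, u τ z * ux τ z) = (1/2) * (u τ x)^2 - (1/2) * (u τ 0)^2 := by
    intro τ hτ
    have : (∫ z in (0:ℝ)..x, u τ z * ux τ z)
        = (fun y => (1/2) * (u τ y)^2) x - (fun y => (1/2) * (u τ y)^2) 0 := by
      apply integral_eq_sub_of_hasDeriv_right_of_le hx0
      · exact (((cont_u_t τ hτ).pow 2).const_smul ((1:ℝ)/2)).mono hIccx
      · intro y hy
        have h := (hderx τ hτ y (hIccx (Ioo_subset_Icc_self hy))).pow 2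
        have h2 := h.const_mul ((1:ℝ)/2)
        have h3 : HasDerivWithinAt (fun y => (1/2) * (u τ y)^2) (u τ y * ux τ y) (Icc 0 1) y := by
          exact h2.congr_deriv (by norm_num; ring)
        exact h3.mono_of_mem_nhdsWithin
          (nhdsWithin_le_nhds (Icc_mem_nhds hy.1 (lt_of_lt_of_le hy.2 hx1)))
      · have : ContinuousOn (fun z => u τ z * ux τ z) (Icc 0 1) :=
          (cont_u_t τ hτ).mul (cont_ux_t τ hτ)
        apply ContinuousOn.intervalIntegrable
        rw [huIx]; exact this.mono hIccx
    simpa using this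
  -- Fubini
  have fubini : (∫ z in (0:ℝ)..x, ∫ τ in (0:ℝ)..t, ut τ z)
      = ∫ τ in (0:ℝ)..t, ∫ z in (0:ℝ)..x, ut τ z := by
    simp only [intervalIntegral.integral_of_le ht0, intervalIntegral.integral_of_le hx0]
    apply MeasureTheory.integral_integral_swap
    have hcont : ContinuousOn (fun p : ℝ × ℝ => ut p.2 p.1) (Icc 0 x ×ˢ Icc 0 t) := by
      apply hut.comp (continuous_snd.prodMk continuous_fst).continuousOn
      rintro ⟨z, τ⟩ ⟨hz, hτ⟩
      exact ⟨hIcct hτ, hIccx hz⟩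
    have hint : IntegrableOn (fun p : ℝ × ℝ => ut p.2 p.1) (Ioc 0 x ×ˢ Ioc 0 t) := by
      exact (hcont.integrableOn_compact (isCompact_Icc.prod isCompact_Icc)).mono_set
        (prod_mono Ioc_subset_Icc_self Ioc_subset_Icc_self)
    have : ((volume : Measure ℝ).restrict (Ioc 0 x)).prod
        ((volume : Measure ℝ).restrict (Ioc 0 t))
        = ((volume : Measure ℝ).prod volume).restrict ((Ioc 0 x) ×ˢ (Ioc 0 t)) :=
      Measure.prod_restrict _ _
    rw [Function.uncurry_def]
    rw [this]
    rwa [← Measure.volume_eq_prod]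
  -- Step D: PDE substitution
  have stepD : ∀ τ ∈ Icc (0:ℝ) 1,
      (∫ z in (0:ℝ)..x, ut τ z)
        = -((1/2) * (u τ x)^2 - (1/2) * (u τ 0)^2) := by
    intro τ hτ
    have : (∫ z in (0:ℝ)..x, ut τ z) = ∫ z in (0:ℝ)..x, -(u τ z * ux τ z) := by
      apply intervalIntegral.integral_congr
      intro z hz
      have hz' : z ∈ Icc (0:ℝ) 1 := hIccx (huIx ▸ hz)
      have := hpde τ hτ z hz'
      show ut τ z = -(u τ z * ux τ z)
      linarith
    rw [this, intervalIntegral.integral_neg, stepB τ hτ]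
  -- combine the τ-integrals
  have hi1 : IntervalIntegrable (fun τ => (u τ x)^2) volume 0 t := by
    apply ContinuousOn.intervalIntegrable
    rw [huIt]
    exact ((cont_u_x x hx').pow 2).mono hIcct
  have hi0 : IntervalIntegrable (fun τ => (u τ 0)^2) volume 0 t := by
    apply ContinuousOn.intervalIntegrable
    rw [huIt]
    exact ((cont_u_x 0 h01).pow 2).mono hIcct
  have outer : (∫ τ in (0:ℝ)..t, ∫ z in (0:ℝ)..x, ut τ z)
      = -((1/2) * ∫ τ in (0:ℝ)..t, (u τ x)^2) + (1/2) * ∫ τ in (0:ℝ)..t, (u τ 0)^2 := by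
    have : (∫ τ in (0:ℝ)..t, ∫ z in (0:ℝ)..x, ut τ z)
        = ∫ τ in (0:ℝ)..t, ((-(1/2)) * (u τ x)^2 + (1/2) * (u τ 0)^2) := by
      apply intervalIntegral.integral_congr
      intro τ hτ
      have h := stepD τ (hIcct (huIt ▸ hτ))
      show (∫ z in (0:ℝ)..x, ut τ z) = _
      rw [h]; ring
    rw [this, intervalIntegral.integral_add (hi1.const_mul _) (hi0.const_mul _),
      intervalIntegral.integral_const_mul, intervalIntegral.integral_const_mul]
    ring
  -- inner integrals
  have hiu_t : IntervalIntegrable (fun z => u t z) volume 0 x := by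
    apply ContinuousOn.intervalIntegrable
    rw [huIx]; exact (cont_u_t t ht').mono hIccx
  have hiu_0 : IntervalIntegrable (fun z => u 0 z) volume 0 x := by
    apply ContinuousOn.intervalIntegrable
    rw [huIx]; exact (cont_u_t 0 h01).mono hIccx
  have hphi : (∫ z in (0:ℝ)..x, φ z) = ∫ z in (0:ℝ)..x, u 0 z := by
    apply intervalIntegral.integral_congr
    intro z hz
    exact (hinit z (hIccx (huIx ▸ hz))).symm
  have key : (∫ z in (0:ℝ)..x, u t z) - (∫ z in (0:ℝ)..x, u 0 z)
      = ∫ z in (0:ℝ)..x, ∫ τ in (0:ℝ)..t, ut τ z := by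
    rw [← intervalIntegral.integral_sub hiu_t hiu_0]
    apply intervalIntegral.integral_congr
    intro z hz
    exact (stepA z (hIccx (huIx ▸ hz))).symm
  rw [hphi]
  rw [key, fubini, outer]
  ring
end

section
/- Let ε ∈ (0, 1/10). If u is C¹ on [0,1]×[0,1] with ‖u‖ := max(sup|u|, sup|u_t|, sup|u_x|) ≤ 1/2, φ is C¹ on [0,1] with |φ|, |φ'| ≤ 1/2, and S u(t,x) = −ε u(t,x) + ε(∫₀ˣ u(t,z) dz − ∫₀ˣ φ(z) dz + (1/2)∫₀ᵗ u(τ,x)² dτ), then S u is C¹ on [0,1]×[0,1] and ‖S u‖ ≤ 1/2. -/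
open Set intervalIntegral MeasureTheory
open scoped Interval

private lemma my_ftc2 {f f' : ℝ → ℝ} {s : ℝ} (hs : s ∈ Icc (0:ℝ) 1)
    (hc : ContinuousOn f (Icc 0 1))
    (hd : ∀ σ ∈ Icc (0:ℝ) 1, HasDerivWithinAt f (f' σ) (Icc 0 1) σ)
    (hint : IntervalIntegrable f' volume 0 s) :
    ∫ σ in (0:ℝ)..s, f' σ = f s - f 0 :=
  intervalIntegral.integral_eq_sub_of_hasDeriv_right_of_le hs.1
    (hc.mono (Icc_subset_Icc le_rfl hs.2))
    (fun σ hσ => ((hd σ ⟨hσ.1.le, hσ.2.le.trans hs.2⟩).hasDerivAt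
      (Icc_mem_nhds hσ.1 (hσ.2.trans_le hs.2))).hasDerivWithinAt) hint

private lemma my_swap (F : ℝ → ℝ → ℝ) (hF : Continuous fun p : ℝ × ℝ => F p.1 p.2)
    {s x : ℝ} (hs : 0 ≤ s) (hx : 0 ≤ x) :
    (∫ σ in (0:ℝ)..s, ∫ z in (0:ℝ)..x, F σ z)
      = ∫ z in (0:ℝ)..x, ∫ σ in (0:ℝ)..s, F σ z := by
  simp only [intervalIntegral.integral_of_le hs, intervalIntegral.integral_of_le hx]
  apply MeasureTheory.integral_integral_swap
  have h1 : ((volume : Measure ℝ).restrict (Ioc 0 s)).prod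
      ((volume : Measure ℝ).restrict (Ioc 0 x))
      = (volume : Measure (ℝ × ℝ)).restrict (Ioc 0 s ×ˢ Ioc 0 x) := by
    rw [MeasureTheory.Measure.prod_restrict, ← MeasureTheory.Measure.volume_eq_prod]
  rw [h1]
  have h2 : IntegrableOn (Function.uncurry F) (Icc 0 s ×ˢ Icc 0 x) volume :=
    hF.continuousOn.integrableOn_compact (isCompact_Icc.prod isCompact_Icc)
  exact h2.mono_set (prod_mono Ioc_subset_Icc_self Ioc_subset_Icc_self)

private lemma my_prim {g : ℝ → ℝ} (hg : Continuous g) (r : ℝ) :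
    HasDerivAt (fun s => ∫ σ in (0:ℝ)..s, g σ) (g r) r :=
  intervalIntegral.integral_hasDerivAt_right (hg.intervalIntegrable _ _)
    (hg.stronglyMeasurableAtFilter _ _) hg.continuousAt

set_option maxHeartbeats 1000000 in
theorem S_maps_ball_to_ball
    (ε : ℝ) (hε : ε ∈ Ioo (0:ℝ) (1/10))
    (u ut ux : ℝ → ℝ → ℝ) (φ : ℝ → ℝ)
    (hu : ContinuousOn (fun p : ℝ × ℝ => u p.1 p.2) (Icc 0 1 ×ˢ Icc 0 1))
    (hutc : ContinuousOn (fun p : ℝ × ℝ => ut p.1 p.2) (Icc 0 1 ×ˢ Icc 0 1))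
    (huxc : ContinuousOn (fun p : ℝ × ℝ => ux p.1 p.2) (Icc 0 1 ×ˢ Icc 0 1))
    (hdert : ∀ t ∈ Icc (0:ℝ) 1, ∀ x ∈ Icc (0:ℝ) 1,
      HasDerivWithinAt (fun s => u s x) (ut t x) (Icc 0 1) t)
    (hderx : ∀ t ∈ Icc (0:ℝ) 1, ∀ x ∈ Icc (0:ℝ) 1,
      HasDerivWithinAt (fun y => u t y) (ux t x) (Icc 0 1) x)
    (hub : ∀ t ∈ Icc (0:ℝ) 1, ∀ x ∈ Icc (0:ℝ) 1,
      |u t x| ≤ 1/2 ∧ |ut t x| ≤ 1/2 ∧ |ux t x| ≤ 1/2)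
    (hφ : ContDiffOn ℝ 1 φ (Icc 0 1))
    (hφb : ∀ x ∈ Icc (0:ℝ) 1, |φ x| ≤ 1/2 ∧ |derivWithin φ (Icc 0 1) x| ≤ 1/2) :
    ∃ St Sx : ℝ → ℝ → ℝ,
      let S : ℝ → ℝ → ℝ := fun t x => -ε * u t x
        + ε * ((∫ z in (0:ℝ)..x, u t z) - (∫ z in (0:ℝ)..x, φ z)
            + (1/2) * ∫ τ in (0:ℝ)..t, (u τ x)^2)
      ContinuousOn (fun p : ℝ × ℝ => St p.1 p.2) (Icc 0 1 ×ˢ Icc 0 1) ∧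
      ContinuousOn (fun p : ℝ × ℝ => Sx p.1 p.2) (Icc 0 1 ×ˢ Icc 0 1) ∧
      (∀ t ∈ Icc (0:ℝ) 1, ∀ x ∈ Icc (0:ℝ) 1,
        HasDerivWithinAt (fun s => S s x) (St t x) (Icc 0 1) t ∧
        HasDerivWithinAt (fun y => S t y) (Sx t x) (Icc 0 1) x ∧
        |S t x| ≤ 1/2 ∧ |St t x| ≤ 1/2 ∧ |Sx t x| ≤ 1/2) := by
  obtain ⟨hε0, hε1⟩ := hε
  -- the projection onto [0,1]
  set π : ℝ → ℝ := fun s => max 0 (min 1 s) with hπdef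
  have πcont : Continuous π := continuous_const.max (continuous_const.min continuous_id)
  have πmem : ∀ s, π s ∈ Icc (0:ℝ) 1 :=
    fun s => ⟨le_max_left _ _, max_le zero_le_one (min_le_left _ _)⟩
  have πeq : ∀ s ∈ Icc (0:ℝ) 1, π s = s := by
    intro s hs
    simp only [hπdef]
    rw [min_eq_right hs.2, max_eq_right hs.1]
  -- globally continuous extensions
  set v : ℝ → ℝ → ℝ := fun a b => u (π a) (π b) with hvdef
  set vt : ℝ → ℝ → ℝ := fun a b => ut (π a) (π b) with hvtdef
  set vx : ℝ → ℝ → ℝ := fun a b => ux (π a) (π b) with hvxdef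
  set Φ : ℝ → ℝ := fun b => φ (π b) with hΦdef
  have prodmap : Continuous fun p : ℝ × ℝ => (π p.1, π p.2) :=
    (πcont.comp continuous_fst).prodMk (πcont.comp continuous_snd)
  have hvc : Continuous fun p : ℝ × ℝ => v p.1 p.2 :=
    hu.comp_continuous prodmap (fun p => mk_mem_prod (πmem _) (πmem _))
  have hvtc : Continuous fun p : ℝ × ℝ => vt p.1 p.2 :=
    hutc.comp_continuous prodmap (fun p => mk_mem_prod (πmem _) (πmem _))
  have hvxc : Continuous fun p : ℝ × ℝ => vx p.1 p.2 :=
    huxc.comp_continuous prodmap (fun p => mk_mem_prod (πmem _) (πmem _))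
  have hΦc : Continuous Φ := hφ.continuousOn.comp_continuous πcont πmem
  have veq : ∀ a ∈ Icc (0:ℝ) 1, ∀ b ∈ Icc (0:ℝ) 1, v a b = u a b := by
    intro a ha b hb; simp only [hvdef]; rw [πeq a ha, πeq b hb]
  have vteq : ∀ a ∈ Icc (0:ℝ) 1, ∀ b ∈ Icc (0:ℝ) 1, vt a b = ut a b := by
    intro a ha b hb; simp only [hvtdef]; rw [πeq a ha, πeq b hb]
  have vxeq : ∀ a ∈ Icc (0:ℝ) 1, ∀ b ∈ Icc (0:ℝ) 1, vx a b = ux a b := by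
    intro a ha b hb; simp only [hvxdef]; rw [πeq a ha, πeq b hb]
  have Φeq : ∀ b ∈ Icc (0:ℝ) 1, Φ b = φ b := by
    intro b hb; simp only [hΦdef]; rw [πeq b hb]
  have hvb : ∀ a b, |v a b| ≤ 1/2 ∧ |vt a b| ≤ 1/2 ∧ |vx a b| ≤ 1/2 :=
    fun a b => hub _ (πmem a) _ (πmem b)
  have hΦball : ∀ b, |Φ b| ≤ 1/2 := fun b => (hφb _ (πmem b)).1
  have hvdert : ∀ t ∈ Icc (0:ℝ) 1, ∀ x ∈ Icc (0:ℝ) 1,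
      HasDerivWithinAt (fun s => v s x) (vt t x) (Icc 0 1) t := by
    intro t ht x hx
    have h := (hdert t ht x hx).congr (fun s hs => veq s hs x hx) (veq t ht x hx)
    rwa [vteq t ht x hx]
  have hvderx : ∀ t ∈ Icc (0:ℝ) 1, ∀ x ∈ Icc (0:ℝ) 1,
      HasDerivWithinAt (fun y => v t y) (vx t x) (Icc 0 1) x := by
    intro t ht x hx
    have h := (hderx t ht x hx).congr (fun y hy => veq t ht y hy) (veq t ht x hx)
    rwa [vxeq t ht x hx]
  -- continuity of the parametric integrals
  have param1 : Continuous fun p : ℝ × ℝ => ∫ z in (0:ℝ)..p.2, vt p.1 z :=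
    intervalIntegral.continuous_parametric_intervalIntegral_of_continuous
      (f := fun (p : ℝ × ℝ) z => vt p.1 z) (μ := volume)
      (hvtc.comp ((continuous_fst.comp continuous_fst).prodMk continuous_snd))
      continuous_snd
  have Fcont : Continuous fun p : ℝ × ℝ => 2 * v p.2 p.1 * vx p.2 p.1 :=
    ((continuous_const.mul (hvc.comp (continuous_snd.prodMk continuous_fst))).mul
      (hvxc.comp (continuous_snd.prodMk continuous_fst)))
  have param2 : Continuous fun p : ℝ × ℝ => ∫ τ in (0:ℝ)..p.1, 2 * v τ p.2 * vx τ p.2 :=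
    intervalIntegral.continuous_parametric_intervalIntegral_of_continuous
      (f := fun (p : ℝ × ℝ) τ => 2 * v τ p.2 * vx τ p.2) (μ := volume)
      (Fcont.comp ((continuous_snd.comp continuous_fst).prodMk continuous_snd))
      continuous_fst
  have cvleft : ∀ z : ℝ, Continuous fun σ => v σ z := fun z =>
    hvc.comp (continuous_id.prodMk continuous_const)
  have cvright : ∀ τ : ℝ, Continuous fun z => v τ z := fun τ =>
    hvc.comp (continuous_const.prodMk continuous_id)
  have cvtleft : ∀ z : ℝ, Continuous fun σ => vt σ z := fun z =>
    hvtc.comp (continuous_id.prodMk continuous_const)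
  have cFright : ∀ τ : ℝ, Continuous fun z => 2 * v τ z * vx τ z := fun τ =>
    (continuous_const.mul (hvc.comp (continuous_const.prodMk continuous_id))).mul
      (hvxc.comp (continuous_const.prodMk continuous_id))
  -- bound helper
  have habs : ∀ (f : ℝ → ℝ) (r : ℝ) (C : ℝ), 0 ≤ r → r ≤ 1 → 0 ≤ C →
      (∀ z ∈ Ι (0:ℝ) r, |f z| ≤ C) → |∫ z in (0:ℝ)..r, f z| ≤ C := by
    intro f r C hr0 hr1 hC hf
    have h := intervalIntegral.norm_integral_le_of_norm_le_const (C := C)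
      (f := f) (a := 0) (b := r) (fun z hz => by rw [Real.norm_eq_abs]; exact hf z hz)
    rw [Real.norm_eq_abs, sub_zero, abs_of_nonneg hr0] at h
    nlinarith
  -- the main pointwise statement
  have derivAll : ∀ t ∈ Icc (0:ℝ) 1, ∀ x ∈ Icc (0:ℝ) 1,
      HasDerivWithinAt (fun s => -ε * u s x
          + ε * ((∫ z in (0:ℝ)..x, u s z) - (∫ z in (0:ℝ)..x, φ z)
            + (1/2) * ∫ τ in (0:ℝ)..s, (u τ x)^2))
        (-ε * vt t x + ε * ((∫ z in (0:ℝ)..x, vt t z) + (1/2) * (v t x)^2))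
        (Icc 0 1) t ∧
      HasDerivWithinAt (fun y => -ε * u t y
          + ε * ((∫ z in (0:ℝ)..y, u t z) - (∫ z in (0:ℝ)..y, φ z)
            + (1/2) * ∫ τ in (0:ℝ)..t, (u τ y)^2))
        (-ε * vx t x
          + ε * (v t x - Φ x + (1/2) * ∫ τ in (0:ℝ)..t, 2 * v τ x * vx τ x))
        (Icc 0 1) x ∧
      |(-ε * u t x + ε * ((∫ z in (0:ℝ)..x, u t z) - (∫ z in (0:ℝ)..x, φ z)
          + (1/2) * ∫ τ in (0:ℝ)..t, (u τ x)^2))| ≤ 1/2 ∧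
      |(-ε * vt t x + ε * ((∫ z in (0:ℝ)..x, vt t z) + (1/2) * (v t x)^2))| ≤ 1/2 ∧
      |(-ε * vx t x
          + ε * (v t x - Φ x + (1/2) * ∫ τ in (0:ℝ)..t, 2 * v τ x * vx τ x))| ≤ 1/2 := by
    intro t ht x hx
    have hIccx : Icc (0:ℝ) x ⊆ Icc (0:ℝ) 1 := Icc_subset_Icc le_rfl hx.2
    have hIcct : Icc (0:ℝ) t ⊆ Icc (0:ℝ) 1 := Icc_subset_Icc le_rfl ht.2
    -- the integral identity in t
    have hAeq : ∀ s ∈ Icc (0:ℝ) 1, (∫ z in (0:ℝ)..x, u s z)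
        = (∫ z in (0:ℝ)..x, v 0 z) + ∫ σ in (0:ℝ)..s, (∫ z in (0:ℝ)..x, vt σ z) := by
      intro s hs
      have swap := my_swap vt hvtc hs.1 hx.1
      have key : ∀ z ∈ Icc (0:ℝ) x, (∫ σ in (0:ℝ)..s, vt σ z) = v s z - v 0 z := by
        intro z hz
        exact my_ftc2 hs (cvleft z).continuousOn
          (fun σ hσ => hvdert σ hσ z (hIccx hz)) ((cvtleft z).intervalIntegrable _ _)
      have e2 : (∫ z in (0:ℝ)..x, ∫ σ in (0:ℝ)..s, vt σ z)
          = ∫ z in (0:ℝ)..x, (v s z - v 0 z) :=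
        intervalIntegral.integral_congr (fun z hz => key z (by rwa [uIcc_of_le hx.1] at hz))
      have e3 : (∫ z in (0:ℝ)..x, (v s z - v 0 z))
          = (∫ z in (0:ℝ)..x, v s z) - ∫ z in (0:ℝ)..x, v 0 z :=
        intervalIntegral.integral_sub ((cvright s).intervalIntegrable _ _)
          ((cvright 0).intervalIntegrable _ _)
      have e4 : (∫ z in (0:ℝ)..x, u s z) = ∫ z in (0:ℝ)..x, v s z :=
        intervalIntegral.integral_congr (fun z hz =>
          (veq s hs z (hIccx (by rwa [uIcc_of_le hx.1] at hz))).symm)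
      rw [e4, swap, e2, e3]; ring
    -- the integral identity in x
    have hBeq : ∀ y ∈ Icc (0:ℝ) 1, (∫ τ in (0:ℝ)..t, (u τ y)^2)
        = (∫ τ in (0:ℝ)..t, (v τ 0)^2)
          + ∫ z in (0:ℝ)..y, (∫ τ in (0:ℝ)..t, 2 * v τ z * vx τ z) := by
      intro y hy
      have swap := my_swap (fun z τ => 2 * v τ z * vx τ z) Fcont hy.1 ht.1
      have key : ∀ τ ∈ Icc (0:ℝ) t,
          (∫ z in (0:ℝ)..y, 2 * v τ z * vx τ z) = (v τ y)^2 - (v τ 0)^2 := by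
        intro τ hτ
        have hτI : τ ∈ Icc (0:ℝ) 1 := hIcct hτ
        refine my_ftc2 hy ((cvright τ).pow 2).continuousOn (fun z hz => ?_)
          ((cFright τ).intervalIntegrable _ _)
        simpa using (hvderx τ hτI z hz).pow 2
      have e2 : (∫ τ in (0:ℝ)..t, ∫ z in (0:ℝ)..y, 2 * v τ z * vx τ z)
          = ∫ τ in (0:ℝ)..t, ((v τ y)^2 - (v τ 0)^2) :=
        intervalIntegral.integral_congr (fun τ hτ => key τ (by rwa [uIcc_of_le ht.1] at hτ))
      have e3 : (∫ τ in (0:ℝ)..t, ((v τ y)^2 - (v τ 0)^2))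
          = (∫ τ in (0:ℝ)..t, (v τ y)^2) - ∫ τ in (0:ℝ)..t, (v τ 0)^2 :=
        intervalIntegral.integral_sub (((cvleft y).pow 2).intervalIntegrable _ _)
          (((cvleft 0).pow 2).intervalIntegrable _ _)
      have e4 : (∫ τ in (0:ℝ)..t, (u τ y)^2) = ∫ τ in (0:ℝ)..t, (v τ y)^2 :=
        intervalIntegral.integral_congr (fun τ hτ => by
          rw [uIcc_of_le ht.1] at hτ
          rw [veq τ (hIcct hτ) y hy])
      rw [e4, swap, e2, e3]; ring
    -- t-derivative
    have gcont : Continuous fun σ => ∫ z in (0:ℝ)..x, vt σ z :=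
      intervalIntegral.continuous_parametric_intervalIntegral_of_continuous'
        (f := fun (σ : ℝ) z => vt σ z) (μ := volume) hvtc 0 x
    have h2 : HasDerivWithinAt (fun s => ∫ z in (0:ℝ)..x, u s z)
        (∫ z in (0:ℝ)..x, vt t z) (Icc 0 1) t := by
      have base := (((my_prim gcont t).const_add
        (∫ z in (0:ℝ)..x, v 0 z))).hasDerivWithinAt (s := Icc 0 1)
      exact base.congr (fun s hs => hAeq s hs) (hAeq t ht)
    have h3 : HasDerivWithinAt (fun s => ∫ τ in (0:ℝ)..s, (u τ x)^2)
        ((u t x)^2) (Icc 0 1) t := by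
      have base := (my_prim (g := fun σ => (v σ x)^2) ((cvleft x).pow 2) t).hasDerivWithinAt (s := Icc 0 1)
      have e : ∀ s ∈ Icc (0:ℝ) 1,
          (∫ τ in (0:ℝ)..s, (u τ x)^2) = ∫ τ in (0:ℝ)..s, (v τ x)^2 := by
        intro s hs
        refine intervalIntegral.integral_congr (fun τ hτ => ?_)
        rw [uIcc_of_le hs.1] at hτ
        rw [veq τ ⟨hτ.1, hτ.2.trans hs.2⟩ x hx]
      have h := base.congr (fun s hs => e s hs) (e t ht)
      rwa [veq t ht x hx] at h
    have main_t : HasDerivWithinAt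
        (fun s => -ε * u s x + ε * ((∫ z in (0:ℝ)..x, u s z) - (∫ z in (0:ℝ)..x, φ z)
          + (1/2) * ∫ τ in (0:ℝ)..s, (u τ x)^2))
        (-ε * ut t x + ε * ((∫ z in (0:ℝ)..x, vt t z) + (1/2) * (u t x)^2))
        (Icc 0 1) t :=
      ((hdert t ht x hx).const_mul (-ε)).add
        (((h2.sub_const _).add (h3.const_mul (1/2))).const_mul ε)
    -- x-derivative
    have k2 : HasDerivWithinAt (fun y => ∫ z in (0:ℝ)..y, u t z) (v t x) (Icc 0 1) x := by
      have base := (my_prim (cvright t) x).hasDerivWithinAt (s := Icc 0 1)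
      have e : ∀ y ∈ Icc (0:ℝ) 1, (∫ z in (0:ℝ)..y, u t z) = ∫ z in (0:ℝ)..y, v t z := by
        intro y hy
        refine intervalIntegral.integral_congr (fun z hz => ?_)
        rw [uIcc_of_le hy.1] at hz
        rw [veq t ht z ⟨hz.1, hz.2.trans hy.2⟩]
      exact base.congr (fun y hy => e y hy) (e x hx)
    have k3 : HasDerivWithinAt (fun y => ∫ z in (0:ℝ)..y, φ z) (Φ x) (Icc 0 1) x := by
      have base := (my_prim hΦc x).hasDerivWithinAt (s := Icc 0 1)
      have e : ∀ y ∈ Icc (0:ℝ) 1, (∫ z in (0:ℝ)..y, φ z) = ∫ z in (0:ℝ)..y, Φ z := by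
        intro y hy
        refine intervalIntegral.integral_congr (fun z hz => ?_)
        rw [uIcc_of_le hy.1] at hz
        rw [Φeq z ⟨hz.1, hz.2.trans hy.2⟩]
      exact base.congr (fun y hy => e y hy) (e x hx)
    have hcont4 : Continuous fun z => ∫ τ in (0:ℝ)..t, 2 * v τ z * vx τ z :=
      intervalIntegral.continuous_parametric_intervalIntegral_of_continuous'
        (f := fun (z : ℝ) τ => 2 * v τ z * vx τ z) (μ := volume) Fcont 0 t
    have k4 : HasDerivWithinAt (fun y => ∫ τ in (0:ℝ)..t, (u τ y)^2)
        (∫ τ in (0:ℝ)..t, 2 * v τ x * vx τ x) (Icc 0 1) x := by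
      have base := (((my_prim hcont4 x).const_add
        (∫ τ in (0:ℝ)..t, (v τ 0)^2))).hasDerivWithinAt (s := Icc 0 1)
      exact base.congr (fun y hy => hBeq y hy) (hBeq x hx)
    have main_x : HasDerivWithinAt
        (fun y => -ε * u t y + ε * ((∫ z in (0:ℝ)..y, u t z) - (∫ z in (0:ℝ)..y, φ z)
          + (1/2) * ∫ τ in (0:ℝ)..t, (u τ y)^2))
        (-ε * ux t x + ε * (v t x - Φ x + (1/2) * ∫ τ in (0:ℝ)..t, 2 * v τ x * vx τ x))
        (Icc 0 1) x :=
      ((hderx t ht x hx).const_mul (-ε)).add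
        (((k2.sub k3).add (k4.const_mul (1/2))).const_mul ε)
    -- bounds
    have hIocx : Ι (0:ℝ) x ⊆ Icc (0:ℝ) 1 := by
      rw [uIoc_of_le hx.1]; exact fun z hz => ⟨hz.1.le, hz.2.trans hx.2⟩
    have hIoct : Ι (0:ℝ) t ⊆ Icc (0:ℝ) 1 := by
      rw [uIoc_of_le ht.1]; exact fun z hz => ⟨hz.1.le, hz.2.trans ht.2⟩
    have hub1 : |u t x| ≤ 1/2 := (hub t ht x hx).1
    have hAb : |∫ z in (0:ℝ)..x, u t z| ≤ 1/2 :=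
      habs _ x _ hx.1 hx.2 (by norm_num) (fun z hz => (hub t ht z (hIocx hz)).1)
    have hCb : |∫ z in (0:ℝ)..x, φ z| ≤ 1/2 :=
      habs _ x _ hx.1 hx.2 (by norm_num) (fun z hz => (hφb z (hIocx hz)).1)
    have hBb : |∫ τ in (0:ℝ)..t, (u τ x)^2| ≤ 1/4 := by
      refine habs _ t _ ht.1 ht.2 (by norm_num) (fun τ hτ => ?_)
      have h1 := (hub τ (hIoct hτ) x hx).1
      have h2 := abs_nonneg (u τ x)
      rw [abs_pow]
      nlinarith
    have hvtb1 : |vt t x| ≤ 1/2 := (hvb t x).2.1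
    have hAvtb : |∫ z in (0:ℝ)..x, vt t z| ≤ 1/2 :=
      habs _ x _ hx.1 hx.2 (by norm_num) (fun z _ => (hvb t z).2.1)
    have hv2b : |(v t x)^2| ≤ 1/4 := by
      have h1 := (hvb t x).1
      have h2 := abs_nonneg (v t x)
      rw [abs_pow]
      nlinarith
    have hvxb1 : |vx t x| ≤ 1/2 := (hvb t x).2.2
    have hvb1 : |v t x| ≤ 1/2 := (hvb t x).1
    have hΦb1 : |Φ x| ≤ 1/2 := hΦball x
    have hDb : |∫ τ in (0:ℝ)..t, 2 * v τ x * vx τ x| ≤ 1/2 := by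
      refine habs _ t _ ht.1 ht.2 (by norm_num) (fun τ _ => ?_)
      have h1 := (hvb τ x).1
      have h2 := (hvb τ x).2.2
      have h3 := abs_nonneg (v τ x)
      have h4 := abs_nonneg (vx τ x)
      rw [abs_mul, abs_mul, abs_two]
      nlinarith
    refine ⟨?_, ?_, ?_, ?_, ?_⟩
    · rw [vteq t ht x hx, veq t ht x hx]
      exact main_t
    · rw [vxeq t ht x hx]
      exact main_x
    · have e : -ε * u t x + ε * ((∫ z in (0:ℝ)..x, u t z) - (∫ z in (0:ℝ)..x, φ z)
          + (1/2) * ∫ τ in (0:ℝ)..t, (u τ x)^2)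
          = ε * (-(u t x) + ((∫ z in (0:ℝ)..x, u t z) - (∫ z in (0:ℝ)..x, φ z)
          + (1/2) * ∫ τ in (0:ℝ)..t, (u τ x)^2)) := by ring
      rw [e, abs_mul, abs_of_pos hε0]
      have h2 : |(-(u t x) + ((∫ z in (0:ℝ)..x, u t z) - (∫ z in (0:ℝ)..x, φ z)
          + (1/2) * ∫ τ in (0:ℝ)..t, (u τ x)^2))| ≤ 13/8 := by
        obtain ⟨l1, r1⟩ := abs_le.mp hub1
        obtain ⟨l2, r2⟩ := abs_le.mp hAb
        obtain ⟨l3, r3⟩ := abs_le.mp hCb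
        obtain ⟨l4, r4⟩ := abs_le.mp hBb
        rw [abs_le]; constructor <;> linarith
      linarith [mul_le_mul_of_nonneg_left h2 hε0.le]
    · have e : -ε * vt t x + ε * ((∫ z in (0:ℝ)..x, vt t z) + (1/2) * (v t x)^2)
          = ε * (-(vt t x) + ((∫ z in (0:ℝ)..x, vt t z) + (1/2) * (v t x)^2)) := by ring
      rw [e, abs_mul, abs_of_pos hε0]
      have h2 : |(-(vt t x) + ((∫ z in (0:ℝ)..x, vt t z) + (1/2) * (v t x)^2))| ≤ 9/8 := by
        obtain ⟨l1, r1⟩ := abs_le.mp hvtb1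
        obtain ⟨l2, r2⟩ := abs_le.mp hAvtb
        obtain ⟨l3, r3⟩ := abs_le.mp hv2b
        rw [abs_le]; constructor <;> linarith
      linarith [mul_le_mul_of_nonneg_left h2 hε0.le]
    · have e : -ε * vx t x
          + ε * (v t x - Φ x + (1/2) * ∫ τ in (0:ℝ)..t, 2 * v τ x * vx τ x)
          = ε * (-(vx t x) + (v t x - Φ x
            + (1/2) * ∫ τ in (0:ℝ)..t, 2 * v τ x * vx τ x)) := by ring
      rw [e, abs_mul, abs_of_pos hε0]
      have h2 : |(-(vx t x) + (v t x - Φ x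
          + (1/2) * ∫ τ in (0:ℝ)..t, 2 * v τ x * vx τ x))| ≤ 7/4 := by
        obtain ⟨l1, r1⟩ := abs_le.mp hvxb1
        obtain ⟨l2, r2⟩ := abs_le.mp hvb1
        obtain ⟨l3, r3⟩ := abs_le.mp hΦb1
        obtain ⟨l4, r4⟩ := abs_le.mp hDb
        rw [abs_le]; constructor <;> linarith
      linarith [mul_le_mul_of_nonneg_left h2 hε0.le]
  refine ⟨fun a b => -ε * vt a b + ε * ((∫ z in (0:ℝ)..b, vt a z) + (1/2) * (v a b)^2),
    fun a b => -ε * vx a b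
      + ε * (v a b - Φ b + (1/2) * ∫ τ in (0:ℝ)..a, 2 * v τ b * vx τ b), ?_⟩
  refine ⟨?_, ?_, derivAll⟩
  · exact ((continuous_const.mul hvtc).add (continuous_const.mul
      (param1.add (continuous_const.mul (hvc.pow 2))))).continuousOn
  · exact ((continuous_const.mul hvxc).add (continuous_const.mul
      (((hvc.sub (hΦc.comp continuous_snd)).add
        (continuous_const.mul param2))))).continuousOn
end
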